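/- arXiv:2103.00641 — 4 statements merged into one kernel-verified Lean document; each statement's English description precedes it below -/
import Mathlib

section
/- Let L be a field, let s ≥ 2, and let f_1, ..., f_s ∈ L[x] be relatively prime polynomials (i.e., their greatest common divisor is 1) of degree at most D. Then there exist polynomials b_1, ..., b_s ∈ L[x] of degree at most D such that b_1·f_1 + ... + b_s·f_s = 1. -/
open Polynomial

/-- Bézout identity with degree bounds: if `f 0, ..., f (s-1)` are relatively prime
polynomials (every common divisor is a unit) of degree at most `D` over a field `L`,
then there are polynomials `b i` of degree at most `D` with `Σ b i · f i = 1`. -/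
theorem bezout_degree_bound
    {L : Type*} [Field L] (s D : ℕ) (hs : 2 ≤ s)
    (f : Fin s → Polynomial L) (hdeg : ∀ i, (f i).natDegree ≤ D)
    (hcop : ∀ d : Polynomial L, (∀ i, d ∣ f i) → IsUnit d) :
    ∃ b : Fin s → Polynomial L, (∀ i, (b i).natDegree ≤ D) ∧ ∑ i, b i * f i = 1 := by
  -- step 1 : unrestricted Bézout identity
  have hspan : Ideal.span (Set.range f) = ⊤ := by
    set I := Ideal.span (Set.range f) with hI
    have hprin : I.IsPrincipal := inferInstance
    set g := Submodule.IsPrincipal.generator I with hg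
    have hdvd : ∀ i, g ∣ f i := by
      intro i
      have hmem : f i ∈ I := Ideal.subset_span ⟨i, rfl⟩
      rw [← Ideal.span_singleton_generator I] at hmem
      exact Ideal.mem_span_singleton.mp hmem
    have hu : IsUnit g := hcop g hdvd
    rw [← Ideal.span_singleton_generator I]
    exact Ideal.span_singleton_eq_top.mpr hu
  have h1 : (1 : Polynomial L) ∈ Ideal.span (Set.range f) := by
    rw [hspan]; trivial
  obtain ⟨b, hb⟩ := (Submodule.mem_span_range_iff_exists_fun (Polynomial L)).mp h1
  simp only [smul_eq_mul] at hb
  -- step 2 : find a nonzero f j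
  have hj : ∃ j, f j ≠ 0 := by
    by_contra h
    push_neg at h
    have := hcop X (fun i => by rw [h i]; exact dvd_zero _)
    exact Polynomial.not_isUnit_X this
  obtain ⟨j, hjne⟩ := hj
  by_cases hdj : (f j).natDegree = 0
  · -- f j is a nonzero constant
    obtain ⟨c, hc⟩ : ∃ c : L, f j = C c := ⟨(f j).coeff 0, eq_C_of_natDegree_eq_zero hdj⟩
    have hcne : c ≠ 0 := by
      intro h; apply hjne; rw [hc, h, map_zero]
    refine ⟨fun i => if i = j then C c⁻¹ else 0, ?_, ?_⟩
    · intro i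
      by_cases h : i = j <;> simp [h]
    · rw [Finset.sum_eq_single j]
      · simp [hc, ← C_mul, inv_mul_cancel₀ hcne]
      · intro i _ hij; simp [hij]
      · intro h; exact absurd (Finset.mem_univ j) h
  · -- f j has positive degree; reduce all b i mod (a monic multiple of) f j
    have hn : 1 ≤ (f j).natDegree := Nat.one_le_iff_ne_zero.mpr hdj
    set n := (f j).natDegree with hnn
    set m := f j * C ((f j).leadingCoeff)⁻¹ with hm
    have hmonic : Monic m := monic_mul_leadingCoeff_inv hjne
    have hdegm : m.degree = (f j).degree := degree_mul_leadingCoeff_inv (f j) hjne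
    have hndegm : m.natDegree = n := natDegree_eq_of_degree_eq hdegm
    set Q : Polynomial L := ∑ i, (b i /ₘ m) * f i with hQ
    set r : Fin s → Polynomial L := fun i =>
      if i = j then b j %ₘ m + C ((f j).leadingCoeff)⁻¹ * Q else b i %ₘ m with hr
    -- degree bound for the remainders
    have hrem : ∀ i : Fin s, (b i %ₘ m).natDegree ≤ n - 1 := by
      intro i
      by_cases h0 : b i %ₘ m = 0
      · simp [h0]
      · have := degree_modByMonic_lt (b i) hmonic
        have hlt : (b i %ₘ m).natDegree < m.natDegree :=
          natDegree_lt_natDegree h0 this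
        omega
    -- the new combination still sums to 1
    have hsum : ∑ i, r i * f i = 1 := by
      have key : ∀ i : Fin s, r i * f i
          = (b i %ₘ m) * f i + (if i = j then C ((f j).leadingCoeff)⁻¹ * Q * f i else 0) := by
        intro i
        by_cases h : i = j <;> simp [hr, h] <;> ring
      calc ∑ i, r i * f i
          = ∑ i, ((b i %ₘ m) * f i
              + (if i = j then C ((f j).leadingCoeff)⁻¹ * Q * f i else 0)) := by
            exact Finset.sum_congr rfl fun i _ => key i
        _ = (∑ i, (b i %ₘ m) * f i) + C ((f j).leadingCoeff)⁻¹ * Q * f j := by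
            rw [Finset.sum_add_distrib, Finset.sum_ite_eq' Finset.univ j]
            simp
        _ = (∑ i, (b i %ₘ m) * f i) + Q * m := by
            rw [hm]; ring
        _ = (∑ i, (b i %ₘ m) * f i) + ∑ i, m * ((b i /ₘ m) * f i) := by
            congr 1
            rw [Finset.sum_mul]
            exact Finset.sum_congr rfl fun i _ => by ring
        _ = ∑ i, ((b i %ₘ m) + m * (b i /ₘ m)) * f i := by
            rw [← Finset.sum_add_distrib]
            exact Finset.sum_congr rfl fun i _ => by ring
        _ = ∑ i, b i * f i := by
            exact Finset.sum_congr rfl fun i _ => by rw [modByMonic_add_div (b i) m]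
        _ = 1 := hb
    refine ⟨r, ?_, hsum⟩
    intro i
    by_cases hij : i = j
    · subst hij
      -- bound degree of r i via the equation r i * f i = 1 - ∑_{k ≠ i} r k * f k
      by_cases h0 : r i = 0
      · simp [h0]
      have heq : r i * f i = 1 - ∑ k ∈ Finset.univ.erase i, r k * f k := by
        have := Finset.sum_erase_add Finset.univ (fun k => r k * f k) (Finset.mem_univ i)
        rw [hsum] at this
        linear_combination this
      have hS : (∑ k ∈ Finset.univ.erase i, r k * f k).natDegree ≤ n - 1 + D := by
        apply Polynomial.natDegree_sum_le_of_forall_le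
        intro k hk
        have hkji : k ≠ i := Finset.ne_of_mem_erase hk
        have hrk : r k = b k %ₘ m := by simp [hr, hkji]
        calc (r k * f k).natDegree ≤ (r k).natDegree + (f k).natDegree :=
              natDegree_mul_le
          _ ≤ n - 1 + D := by
              rw [hrk]
              exact Nat.add_le_add (hrem k) (hdeg k)
      have hrhs : (1 - ∑ k ∈ Finset.univ.erase i, r k * f k).natDegree ≤ n - 1 + D := by
        refine le_trans (natDegree_sub_le _ _) ?_
        rw [natDegree_one, max_le_iff]
        exact ⟨Nat.zero_le _, hS⟩
      rw [← heq, natDegree_mul h0 hjne] at hrhs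
      have hnD : n ≤ D := hdeg i
      omega
    · have hri : r i = b i %ₘ m := by simp [hr, hij]
      rw [hri]
      have := hrem i
      have hnD : n ≤ D := hdeg j
      omega
end

section
/- Let q be a power of a prime, let s ≥ 2, and let f_1, ..., f_s ∈ F_q[t][x] be polynomials of degree at most D in x and of heights at most H, not all zero. Assume that the polynomials f_1(x), ..., f_s(x) have at most N_0 common zeros in the algebraic closure of F_q(t). Then there exists a nonzero polynomial 𝒯 ∈ F_q[t] of degree at most (2D+1)H with the property that for each τ in the algebraic closure of F_q with 𝒯(τ) ≠ 0, the specialized polynomials f_1(τ; x), ..., f_s(τ; x), obtained by applying the evaluation t ↦ τ to each coefficient, have at most N_0 common zeros in the algebraic closure of F_q. -/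
open Polynomial

/-- The height of a polynomial `f ∈ F_q[t][x]`: the maximum of the `t`-degrees of its
coefficients. -/
noncomputable def polyHeight {Fq : Type*} [Field Fq] (f : Polynomial (Polynomial Fq)) : ℕ :=
  f.support.sup fun i => (f.coeff i).natDegree

namespace SpecAux
variable {Fq : Type*} [Field Fq]

/-- swap map `Fq[t][x] → Fq[x][t]` (same type, roles of variables swapped). -/
noncomputable def theta : Polynomial (Polynomial Fq) →+* Polynomial (Polynomial Fq) :=
  eval₂RingHom (mapRingHom (C : Fq →+* Polynomial Fq)) (C X)

lemma theta_coeff_coeff (g : Polynomial (Polynomial Fq)) (k i : ℕ) :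
    ((theta g).coeff k).coeff i = (g.coeff i).coeff k := by
  rw [theta, coe_eval₂RingHom, eval₂_eq_sum, Polynomial.sum, finset_sum_coeff,
    finset_sum_coeff]
  have hterm : ∀ j ∈ g.support,
      (((mapRingHom (C : Fq →+* Polynomial Fq)) (g.coeff j) * (C X) ^ j).coeff k).coeff i
        = if j = i then (g.coeff i).coeff k else 0 := by
    intro j _
    rw [← C_pow, coeff_mul_C, coe_mapRingHom, coeff_map, coeff_C_mul, coeff_X_pow]
    by_cases h : j = i
    · simp [h]
    · simp only [if_neg h, coeff_X_pow, if_neg (fun hh : i = j => h hh.symm)]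
      simp
  rw [Finset.sum_congr rfl hterm, Finset.sum_ite_eq' g.support i
    (fun _ => (g.coeff i).coeff k)]
  by_cases hi : i ∈ g.support
  · simp [hi]
  · simp [hi, Polynomial.notMem_support_iff.mp hi]

lemma polyHeight_eq_natDegree_theta (g : Polynomial (Polynomial Fq)) :
    polyHeight g = (theta g).natDegree := by
  apply le_antisymm
  · apply Finset.sup_le
    intro i hi
    by_cases hzi : g.coeff i = 0
    · simp [hzi]
    apply Polynomial.le_natDegree_of_ne_zero
    intro hz
    have := theta_coeff_coeff g (g.coeff i).natDegree i
    rw [hz] at this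
    simp only [Polynomial.coeff_zero] at this
    exact (Polynomial.leadingCoeff_ne_zero.mpr hzi) this.symm
  · apply Polynomial.natDegree_le_iff_coeff_eq_zero.mpr
    intro k hk
    ext i
    rw [theta_coeff_coeff, Polynomial.coeff_zero]
    apply Polynomial.coeff_eq_zero_of_natDegree_lt
    refine lt_of_le_of_lt ?_ hk
    by_cases hi : i ∈ g.support
    · exact Finset.le_sup (f := fun i => (g.coeff i).natDegree) hi
    · simp [Polynomial.notMem_support_iff.mp hi]

lemma theta_ne_zero {g : Polynomial (Polynomial Fq)} (hg : g ≠ 0) : theta g ≠ 0 := by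
  intro h
  apply hg
  ext i k
  have := theta_coeff_coeff g k i
  rw [h] at this
  simpa using this.symm

lemma polyHeight_mul {g h : Polynomial (Polynomial Fq)} (hg : g ≠ 0) (hh : h ≠ 0) :
    polyHeight (g * h) = polyHeight g + polyHeight h := by
  rw [polyHeight_eq_natDegree_theta, polyHeight_eq_natDegree_theta,
    polyHeight_eq_natDegree_theta, map_mul,
    Polynomial.natDegree_mul (theta_ne_zero hg) (theta_ne_zero hh)]

lemma polyHeight_dvd_le {g h : Polynomial (Polynomial Fq)} (hdvd : g ∣ h) (hh : h ≠ 0) :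
    polyHeight g ≤ polyHeight h := by
  obtain ⟨c, rfl⟩ := hdvd
  have hg : g ≠ 0 := fun h0 => hh (by simp [h0])
  have hc : c ≠ 0 := fun h0 => hh (by simp [h0])
  rw [polyHeight_mul hg hc]; omega

lemma polyHeight_C (r : Polynomial Fq) : polyHeight (C r : Polynomial (Polynomial Fq)) = r.natDegree := by
  by_cases hr : r = 0
  · simp [hr, polyHeight]
  · rw [polyHeight]
    rw [Polynomial.support_C hr]
    simp

lemma natDegree_coeff_le_polyHeight (g : Polynomial (Polynomial Fq)) (k : ℕ) :
    (g.coeff k).natDegree ≤ polyHeight g := by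
  by_cases hk : k ∈ g.support
  · exact Finset.le_sup (f := fun i => (g.coeff i).natDegree) hk
  · simp [Polynomial.notMem_support_iff.mp hk]

lemma sum_C_coeff_mul_X_pow {N : ℕ} (g : Polynomial (Polynomial Fq)) (hg : g.natDegree < N) :
    ∑ k : Fin N, C (g.coeff (k : ℕ)) * X ^ (k : ℕ) = g := by
  refine Polynomial.ext fun j => ?_
  rw [finset_sum_coeff]
  by_cases hj : j < N
  · rw [Finset.sum_eq_single (⟨j, hj⟩ : Fin N)]
    · simp
    · intro b _ hb
      rw [coeff_C_mul, coeff_X_pow, if_neg (fun h : j = (b : ℕ) => hb (Fin.ext h.symm)),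
        mul_zero]
    · simp
  · have hNj : N ≤ j := le_of_not_gt hj
    have h1 : g.coeff j = 0 := coeff_eq_zero_of_natDegree_lt (by omega)
    rw [h1]
    exact Finset.sum_eq_zero fun k _ => by
      rw [coeff_C_mul, coeff_X_pow, if_neg (fun h : j = (k:ℕ) => hj (h ▸ k.isLt)), mul_zero]

set_option maxHeartbeats 1600000 in
theorem exists_const_bezout (u v : Polynomial (Polynomial Fq)) (hu : u ≠ 0) (hv : v ≠ 0)
    (hm : u.natDegree ≠ 0)
    (hnd : ∀ b : Polynomial (Polynomial Fq), b ≠ 0 → b.natDegree < u.natDegree → ¬ u ∣ b * v) :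
    ∃ r : Polynomial Fq, r ≠ 0 ∧
      r.natDegree ≤ v.natDegree * polyHeight u + u.natDegree * polyHeight v ∧
      ∃ a b : Polynomial (Polynomial Fq), (C r : Polynomial (Polynomial Fq)) = a * u + b * v := by
  classical
  set m := u.natDegree with hmdef
  set n := v.natDegree with hndef
  set N := m + n with hN
  have hNpos : 0 < N := by omega
  set w : Fin N → Polynomial (Polynomial Fq) :=
    fun l => if (l : ℕ) < n then u * X ^ (l : ℕ) else v * X ^ ((l : ℕ) - n) with hw
  have hwdeg : ∀ l, (w l).natDegree < N := by
    intro l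
    have hl' : (l : ℕ) < N := l.isLt
    by_cases hl : (l : ℕ) < n
    · rw [hw]; simp only [if_pos hl]
      rw [natDegree_mul hu (pow_ne_zero _ X_ne_zero), natDegree_X_pow]
      omega
    · rw [hw]; simp only [if_neg hl]
      rw [natDegree_mul hv (pow_ne_zero _ X_ne_zero), natDegree_X_pow]
      omega
  set A : Matrix (Fin N) (Fin N) (Polynomial Fq) := fun k l => (w l).coeff (k : ℕ) with hA
  have hwsum : ∀ l, w l = ∑ k : Fin N, C (A k l) * X ^ (k : ℕ) :=
    fun l => (sum_C_coeff_mul_X_pow _ (hwdeg l)).symm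
  -- the general expansion
  have hgen : ∀ c : Fin N → Polynomial Fq,
      ∑ l : Fin N, C (c l) * w l = ∑ k : Fin N, C ((A.mulVec c) k) * X ^ (k : ℕ) := by
    intro c
    have h1 : ∀ l : Fin N, C (c l) * w l = ∑ k : Fin N, C (A k l * c l) * X ^ (k : ℕ) := by
      intro l
      rw [hwsum l, Finset.mul_sum]
      refine Finset.sum_congr rfl fun k _ => ?_
      rw [map_mul]; ring
    rw [Finset.sum_congr rfl fun l _ => h1 l, Finset.sum_comm]
    refine Finset.sum_congr rfl fun k _ => ?_
    rw [← Finset.sum_mul, ← map_sum]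
    rfl
  have hsplit : ∀ c : Fin N → Polynomial Fq,
      (∑ l ∈ Finset.univ.filter (fun l : Fin N => (l : ℕ) < n), C (c l) * X ^ (l : ℕ)) * u
        + (∑ l ∈ Finset.univ.filter (fun l : Fin N => ¬ (l : ℕ) < n),
            C (c l) * X ^ ((l : ℕ) - n)) * v
      = ∑ l : Fin N, C (c l) * w l := by
    intro c
    rw [← Finset.sum_filter_add_sum_filter_not Finset.univ (fun l : Fin N => (l : ℕ) < n)
      (fun l => C (c l) * w l)]
    congr 1
    · rw [Finset.sum_mul]
      refine Finset.sum_congr rfl fun l hl => ?_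
      have hl' : (l : ℕ) < n := (Finset.mem_filter.mp hl).2
      rw [hw]; simp only [if_pos hl']; ring
    · rw [Finset.sum_mul]
      refine Finset.sum_congr rfl fun l hl => ?_
      have hl' : ¬ (l : ℕ) < n := (Finset.mem_filter.mp hl).2
      rw [hw]; simp only [if_neg hl']; ring
  have hdet : A.det ≠ 0 := by
    intro h0
    obtain ⟨c, hc, hMc⟩ := Matrix.exists_mulVec_eq_zero_iff.mpr h0
    set a : Polynomial (Polynomial Fq) :=
      ∑ l ∈ Finset.univ.filter (fun l : Fin N => (l : ℕ) < n), C (c l) * X ^ (l : ℕ) with ha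
    set b : Polynomial (Polynomial Fq) :=
      ∑ l ∈ Finset.univ.filter (fun l : Fin N => ¬ (l : ℕ) < n), C (c l) * X ^ ((l : ℕ) - n)
      with hb
    have habv : a * u + b * v = 0 := by
      rw [hsplit c, hgen c, hMc]; simp
    have hacoeff : ∀ j : Fin N, (j : ℕ) < n → a.coeff (j : ℕ) = c j := by
      intro j hj
      rw [ha, finset_sum_coeff, Finset.sum_eq_single j]
      · simp
      · intro l hl hlj
        rw [coeff_C_mul, coeff_X_pow, if_neg (fun h : (j:ℕ) = (l:ℕ) => hlj (Fin.ext h.symm)),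
          mul_zero]
      · intro hj'
        exact absurd (Finset.mem_filter.mpr ⟨Finset.mem_univ j, hj⟩) hj'
    have hbcoeff : ∀ j : Fin N, n ≤ (j : ℕ) → b.coeff ((j : ℕ) - n) = c j := by
      intro j hj
      rw [hb, finset_sum_coeff, Finset.sum_eq_single j]
      · simp
      · intro l hl hlj
        have hln : n ≤ (l : ℕ) := le_of_not_gt (Finset.mem_filter.mp hl).2
        rw [coeff_C_mul, coeff_X_pow, if_neg, mul_zero]
        intro h
        exact hlj (Fin.ext (by omega))
      · intro hj'
        exact absurd (Finset.mem_filter.mpr ⟨Finset.mem_univ j, not_lt.mpr hj⟩) hj'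
    have hbdeg : b.natDegree < m := by
      refine lt_of_le_of_lt (natDegree_sum_le_of_forall_le _ _ fun l hl => ?_)
        (by omega : m - 1 < m)
      have hln : n ≤ (l : ℕ) := le_of_not_gt (Finset.mem_filter.mp hl).2
      refine le_trans (natDegree_C_mul_le _ _) ?_
      rw [natDegree_X_pow]
      have := l.isLt
      omega
    by_cases hbz : b = 0
    · have haz : a = 0 := by
        have : a * u = 0 := by rw [hbz] at habv; simpa using habv
        rcases mul_eq_zero.mp this with h | h
        · exact h
        · exact absurd h hu
      apply hc
      funext l
      by_cases hl : (l : ℕ) < n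
      · rw [← hacoeff l hl, haz]; simp
      · rw [← hbcoeff l (le_of_not_gt hl), hbz]; simp
    · refine hnd b hbz hbdeg ⟨-a, ?_⟩
      have : b * v = -(a * u) := by linear_combination habv
      rw [this]; ring
  -- now build r := det A
  refine ⟨A.det, hdet, ?_, ?_⟩
  · have hterm : ∀ (σ : Equiv.Perm (Fin N)) (l : Fin N),
        (A (σ l) l).natDegree ≤ if (l : ℕ) < n then polyHeight u else polyHeight v := by
      intro σ l
      by_cases hl : (l : ℕ) < n
      · rw [hA]; simp only [hw, if_pos hl]
        rw [coeff_mul_X_pow']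
        split
        · exact natDegree_coeff_le_polyHeight u _
        · simp
      · rw [hA]; simp only [hw, if_neg hl]
        rw [coeff_mul_X_pow']
        split
        · exact natDegree_coeff_le_polyHeight v _
        · simp
    have e1 : ∑ l ∈ Finset.Ico 0 n, (if l < n then polyHeight u else polyHeight v)
        = n * polyHeight u := by
      rw [Finset.sum_congr rfl fun l hl => if_pos (Finset.mem_Ico.mp hl).2,
        Finset.sum_const, Nat.card_Ico, smul_eq_mul, Nat.sub_zero]
    have e2 : ∑ l ∈ Finset.Ico n N, (if l < n then polyHeight u else polyHeight v)
        = m * polyHeight v := by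
      rw [Finset.sum_congr rfl fun l hl => if_neg (not_lt.mpr (Finset.mem_Ico.mp hl).1),
        Finset.sum_const, Nat.card_Ico, smul_eq_mul]
      congr 1
      omega
    have hIco : ∑ l : Fin N, (if (l : ℕ) < n then polyHeight u else polyHeight v)
        = n * polyHeight u + m * polyHeight v := by
      rw [Fin.sum_univ_eq_sum_range (fun l => if l < n then polyHeight u else polyHeight v) N,
        Finset.range_eq_Ico,
        ← Finset.sum_Ico_consecutive _ (Nat.zero_le n) (by omega : n ≤ N), e1, e2]
    rw [Matrix.det_apply]
    refine natDegree_sum_le_of_forall_le _ _ fun σ _ => ?_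
    have hsm : (Equiv.Perm.sign σ • ∏ l, A (σ l) l).natDegree
        ≤ (∏ l, A (σ l) l).natDegree := by
      rcases Int.units_eq_one_or (Equiv.Perm.sign σ) with h | h <;> rw [h] <;>
        simp [Units.smul_def, Units.val_neg, Units.val_one, neg_one_smul, natDegree_neg]
    refine le_trans hsm (le_trans (natDegree_prod_le _ _) ?_)
    refine le_trans (Finset.sum_le_sum fun l _ => hterm σ l) ?_
    exact hIco.le
  · obtain ⟨c, hcmv⟩ : ∃ c : Fin N → Polynomial Fq,
        ∀ k, A.mulVec c k = if k = (⟨0, hNpos⟩ : Fin N) then A.det else 0 := by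
      refine ⟨fun l => A.adjugate l ⟨0, hNpos⟩, fun k => ?_⟩
      have h2 : (A * A.adjugate) k ⟨0, hNpos⟩
          = (A.det • (1 : Matrix (Fin N) (Fin N) (Polynomial Fq))) k ⟨0, hNpos⟩ := by
        rw [Matrix.mul_adjugate]
      rw [Matrix.mul_apply] at h2
      rw [show A.mulVec (fun l => A.adjugate l ⟨0, hNpos⟩) k
          = ∑ l, A k l * A.adjugate l ⟨0, hNpos⟩ from rfl, h2, Matrix.smul_apply,
        Matrix.one_apply]
      split <;> simp
    refine ⟨∑ l ∈ Finset.univ.filter (fun l : Fin N => (l : ℕ) < n), C (c l) * X ^ (l : ℕ),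
      ∑ l ∈ Finset.univ.filter (fun l : Fin N => ¬ (l : ℕ) < n),
        C (c l) * X ^ ((l : ℕ) - n), ?_⟩
    rw [hsplit c, hgen c]
    rw [Finset.sum_congr rfl fun k _ => by rw [hcmv k]]
    rw [Finset.sum_eq_single (⟨0, hNpos⟩ : Fin N)]
    · simp
    · intro b _ hb
      rw [if_neg hb, map_zero, zero_mul]
    · intro h
      exact absurd (Finset.mem_univ _) h


lemma polyHeight_prod {α : Type*} (s : Finset α) (g : α → Polynomial (Polynomial Fq))
    (hg : ∀ a ∈ s, g a ≠ 0) :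
    polyHeight (∏ a ∈ s, g a) = ∑ a ∈ s, polyHeight (g a) := by
  rw [polyHeight_eq_natDegree_theta, map_prod,
    Polynomial.natDegree_prod _ _ (fun a ha => theta_ne_zero (hg a ha))]
  exact Finset.sum_congr rfl fun a ha => (polyHeight_eq_natDegree_theta _).symm

lemma isPrimitive_of_prime {π : Polynomial (Polynomial Fq)} (hπ : Prime π)
    (hdeg : π.natDegree ≠ 0) : π.IsPrimitive := by
  intro r hr
  have hrne : r ≠ 0 := by
    rintro rfl
    rw [map_zero] at hr
    exact hπ.ne_zero (zero_dvd_iff.mp hr)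
  obtain ⟨w, hw⟩ := hr
  rcases hπ.irreducible.isUnit_or_isUnit hw with h | h
  · exact Polynomial.isUnit_C.mp h
  · exfalso
    apply hdeg
    rw [hw, natDegree_mul (by simpa using hrne) h.ne_zero,
      natDegree_C, natDegree_eq_zero_of_isUnit h]

lemma exists_contraction (p : ℕ) (hp : p.Prime) (hchar : CharP (RatFunc Fq) p)
    {π : Polynomial (Polynomial Fq)} (hπ : Prime π) (hdeg : π.natDegree ≠ 0) :
    ∃ (σ : Polynomial (Polynomial Fq)) (m : ℕ),
      expand (Polynomial Fq) (p ^ m) σ = π ∧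
      (σ.map (algebraMap (Polynomial Fq) (RatFunc Fq))).Separable := by
  classical
  haveI := hchar
  haveI : Fact p.Prime := ⟨hp⟩
  haveI : ExpChar (RatFunc Fq) p := inferInstance
  have hKinj : Function.Injective (algebraMap (Polynomial Fq) (RatFunc Fq)) :=
    IsFractionRing.injective _ _
  have hprim : π.IsPrimitive := isPrimitive_of_prime hπ hdeg
  have hirrK : Irreducible (π.map (algebraMap (Polynomial Fq) (RatFunc Fq))) :=
    (hprim.irreducible_iff_irreducible_map_fraction_map).mp hπ.irreducible
  obtain ⟨g, hgsep, m, hexp⟩ := hirrK.hasSeparableContraction p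
  have hpm : p ^ m ≠ 0 := pow_ne_zero _ hp.ne_zero
  refine ⟨contract (p ^ m) π, m, ?_, ?_⟩
  · apply Polynomial.map_injective _ hKinj
    rw [map_expand, map_contract hpm, ← hexp, contract_expand _ hpm, hexp]
  · rw [map_contract hpm, ← hexp, contract_expand _ hpm]
    exact hgsep

end SpecAux

open SpecAux in
set_option maxHeartbeats 2000000 in
/-- Preserving the number of common zeros under specializations `t ↦ τ`. -/
theorem specialization_preserves_common_zeros
    {Fq : Type*} [Field Fq] [Fintype Fq]
    (s D H N₀ : ℕ) (hs : 2 ≤ s)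
    (f : Fin s → Polynomial (Polynomial Fq))
    (hdeg : ∀ i, (f i).natDegree ≤ D)
    (hht : ∀ i, polyHeight (f i) ≤ H)
    (hne : ∃ i, f i ≠ 0)
    (hzeros : ∃ Z : Finset (AlgebraicClosure (RatFunc Fq)), Z.card ≤ N₀ ∧
      {x : AlgebraicClosure (RatFunc Fq) |
          ∀ i, ((f i).map
            ((algebraMap (RatFunc Fq) (AlgebraicClosure (RatFunc Fq))).comp
              (algebraMap (Polynomial Fq) (RatFunc Fq)))).eval x = 0} ⊆ ↑Z) :
    ∃ 𝒯 : Polynomial Fq, 𝒯 ≠ 0 ∧ 𝒯.natDegree ≤ (2 * D + 1) * H ∧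
      ∀ τ : AlgebraicClosure Fq, aeval τ 𝒯 ≠ 0 →
        ∃ Z' : Finset (AlgebraicClosure Fq), Z'.card ≤ N₀ ∧
          {x : AlgebraicClosure Fq |
              ∀ i, ((f i).map
                (eval₂RingHom (algebraMap Fq (AlgebraicClosure Fq)) τ)).eval x = 0} ⊆ ↑Z' := by
  classical
  obtain ⟨i₀, hF0⟩ := hne
  obtain ⟨Z, hZcard, hZsub⟩ := hzeros
  -- characteristic
  set pc := ringChar Fq with hpc
  haveI : CharP Fq pc := ringChar.charP Fq
  have hp : pc.Prime := CharP.char_is_prime Fq pc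
  haveI : Fact pc.Prime := ⟨hp⟩
  have hKinj : Function.Injective (algebraMap (Polynomial Fq) (RatFunc Fq)) :=
    IsFractionRing.injective _ _
  haveI hcharK : CharP (RatFunc Fq) pc := by
    have hinj : Function.Injective
        ((algebraMap (Polynomial Fq) (RatFunc Fq)).comp (C : Fq →+* Polynomial Fq)) :=
      hKinj.comp Polynomial.C_injective
    exact charP_of_injective_ringHom hinj pc
  haveI : ExpChar (RatFunc Fq) pc := inferInstance
  haveI hcharA : CharP (AlgebraicClosure Fq) pc :=
    charP_of_injective_ringHom (algebraMap Fq (AlgebraicClosure Fq)).injective pc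
  haveI : ExpChar (AlgebraicClosure Fq) pc := inferInstance
  -- factorization of F := f i₀
  set F := f i₀ with hFdef
  set M := UniqueFactorizationMonoid.normalizedFactors F with hMdef
  obtain ⟨un, hun⟩ : Associated M.prod F :=
    UniqueFactorizationMonoid.prod_normalizedFactors hF0
  have hprime : ∀ g ∈ M, Prime g := fun g hg =>
    UniqueFactorizationMonoid.prime_of_normalized_factor g hg
  have hnormalized : ∀ g ∈ M, normalize g = g := fun g hg =>
    UniqueFactorizationMonoid.normalize_normalized_factor g hg
  set Ma := M.filter (fun g => g.natDegree = 0) with hMa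
  set Mb := M.filter (fun g => ¬ g.natDegree = 0) with hMb
  set M1 := Mb.filter (fun g => ∀ i, g ∣ f i) with hM1
  set M2 := Mb.filter (fun g => ¬ ∀ i, g ∣ f i) with hM2
  have hMab : Ma + Mb = M := Multiset.filter_add_not _ M
  have hM12 : M1 + M2 = Mb := Multiset.filter_add_not _ Mb
  have hM1mem : ∀ g ∈ M1, g ∈ M ∧ g.natDegree ≠ 0 ∧ ∀ i, g ∣ f i := by
    intro g hg
    have h1 := Multiset.mem_filter.mp hg
    have h2 := Multiset.mem_filter.mp h1.1
    exact ⟨h2.1, h2.2, h1.2⟩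
  have hM2mem : ∀ g ∈ M2, g ∈ M ∧ g.natDegree ≠ 0 ∧ ∃ j, ¬ g ∣ f j := by
    intro g hg
    have h1 := Multiset.mem_filter.mp hg
    have h2 := Multiset.mem_filter.mp h1.1
    exact ⟨h2.1, h2.2, not_forall.mp h1.2⟩
  have hMne : ∀ g ∈ M, g ≠ 0 := fun g hg => (hprime g hg).ne_zero
  have hMprodsplit : Ma.prod * (M1.prod * M2.prod) * (un : Polynomial (Polynomial Fq)) = F := by
    rw [← hun]
    congr 1
    rw [← hMab, Multiset.prod_add, ← hM12, Multiset.prod_add]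
  -- the constant part
  have hMadeg : Ma.prod.natDegree = 0 := by
    refine Nat.le_zero.mp (le_trans (natDegree_multiset_prod_le _) ?_)
    refine le_of_eq (Multiset.sum_eq_zero ?_)
    intro d hd
    obtain ⟨g, hg, rfl⟩ := Multiset.mem_map.mp hd
    exact (Multiset.mem_filter.mp hg).2
  have hMane : Ma.prod ≠ 0 :=
    Multiset.prod_ne_zero fun h0 =>
      hMne 0 (Multiset.mem_of_mem_filter h0) rfl
  obtain ⟨c₀, hc₀⟩ : ∃ c₀ : Polynomial Fq, (C c₀ : Polynomial (Polynomial Fq)) = Ma.prod :=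
    ⟨Ma.prod.coeff 0, (Polynomial.eq_C_of_natDegree_eq_zero hMadeg).symm⟩
  have hc₀ne : c₀ ≠ 0 := fun h => hMane (by rw [← hc₀, h, map_zero])
  -- contraction data for elements of M1
  have hcontr : ∀ x : {g // g ∈ M1.toFinset}, ∃ (σ : Polynomial (Polynomial Fq)) (m : ℕ),
      expand (Polynomial Fq) (pc ^ m) σ = x.1 ∧
      (σ.map (algebraMap (Polynomial Fq) (RatFunc Fq))).Separable := by
    intro x
    obtain ⟨hmem, hdeg', -⟩ := hM1mem x.1 (Multiset.mem_toFinset.mp x.2)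
    exact exists_contraction pc hp hcharK (hprime _ hmem) hdeg'
  choose σf mf hσexp hσsep using hcontr
  have hσlc : ∀ x, (σf x).leadingCoeff = x.1.leadingCoeff := by
    intro x
    conv_rhs => rw [← hσexp x]
    rw [leadingCoeff_expand (pow_pos hp.pos _)]
  have hσne : ∀ x, σf x ≠ 0 := by
    intro x h0
    have h1 := hσexp x
    rw [h0, map_zero] at h1
    exact hMne x.1 (hM1mem _ (Multiset.mem_toFinset.mp x.2)).1 h1.symm
  -- Bezout data for elements of M2
  have hbez : ∀ x : {g // g ∈ M2.toFinset},
      ∃ (r : Polynomial Fq) (j : Fin s) (a b : Polynomial (Polynomial Fq)),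
      r ≠ 0 ∧
      r.natDegree ≤ (f j).natDegree * polyHeight (x.1 ^ M2.count x.1)
        + (x.1 ^ M2.count x.1).natDegree * polyHeight (f j) ∧
      (C r : Polynomial (Polynomial Fq)) = a * x.1 ^ M2.count x.1 + b * f j := by
    intro x
    have hxM2 := Multiset.mem_toFinset.mp x.2
    obtain ⟨hmem, hdeg', j, hj⟩ := hM2mem x.1 hxM2
    have hπ := hprime _ hmem
    have hvne : f j ≠ 0 := fun h => hj (h ▸ dvd_zero _)
    have hcount : M2.count x.1 ≠ 0 := (Multiset.count_pos.mpr hxM2).ne'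
    have hune : x.1 ^ M2.count x.1 ≠ 0 := pow_ne_zero _ hπ.ne_zero
    have hudeg : (x.1 ^ M2.count x.1).natDegree ≠ 0 := by
      rw [natDegree_pow]
      exact Nat.mul_ne_zero hcount hdeg'
    obtain ⟨r, hr0, hrdeg, a, b, hab⟩ :=
      exists_const_bezout (x.1 ^ M2.count x.1) (f j) hune hvne hudeg (by
        intro b hb hbdeg hdvd
        have hdvdb : x.1 ^ M2.count x.1 ∣ b := hπ.pow_dvd_of_dvd_mul_right _ hj hdvd
        exact absurd (natDegree_le_of_dvd hdvdb hb) (not_le.mpr hbdeg))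
    exact ⟨r, j, a, b, hr0, hrdeg, hab⟩
  choose rf jf af bf hrne hrdeg habf using hbez
  -- the polynomial 𝒯
  set 𝒯 : Polynomial Fq :=
    c₀ * (∏ π ∈ M1.toFinset, π.leadingCoeff) * (∏ x ∈ M2.toFinset.attach, rf x) with h𝒯
  have hlcne : ∀ π ∈ M1.toFinset, π.leadingCoeff ≠ 0 := fun π hπ =>
    leadingCoeff_ne_zero.mpr (hMne π (hM1mem π (Multiset.mem_toFinset.mp hπ)).1)
  have h𝒯ne : 𝒯 ≠ 0 :=
    mul_ne_zero (mul_ne_zero hc₀ne (Finset.prod_ne_zero_iff.mpr hlcne))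
      (Finset.prod_ne_zero_iff.mpr fun x _ => hrne x)
  -- degree budget A
  have hT1dvd : (C c₀ : Polynomial (Polynomial Fq)) * ∏ π ∈ M1.toFinset, π ∣ F := by
    have h1 : ∏ π ∈ M1.toFinset, π ∣ M1.prod := by
      simpa using Multiset.toFinset_prod_dvd_prod M1
    refine dvd_trans (mul_dvd_mul_left _ h1) ?_
    rw [hc₀]
    exact ⟨M2.prod * (un : Polynomial (Polynomial Fq)), by rw [← hMprodsplit]; ring⟩
  have hbudgetA : c₀.natDegree + ∑ π ∈ M1.toFinset, π.leadingCoeff.natDegree ≤ H := by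
    have hprodne : (∏ π ∈ M1.toFinset, π) ≠ 0 :=
      Finset.prod_ne_zero_iff.mpr fun π hπ =>
        hMne π (hM1mem π (Multiset.mem_toFinset.mp hπ)).1
    have h1 : polyHeight ((C c₀ : Polynomial (Polynomial Fq)) * ∏ π ∈ M1.toFinset, π) ≤ H :=
      le_trans (polyHeight_dvd_le hT1dvd hF0) (hht i₀)
    rw [polyHeight_mul (by simpa using hc₀ne) hprodne, polyHeight_C,
      polyHeight_prod _ _ (fun π hπ => hMne π (hM1mem π (Multiset.mem_toFinset.mp hπ)).1)]
      at h1
    have h2 : ∑ π ∈ M1.toFinset, π.leadingCoeff.natDegree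
        ≤ ∑ π ∈ M1.toFinset, polyHeight π :=
      Finset.sum_le_sum fun π _ => natDegree_coeff_le_polyHeight π π.natDegree
    omega
  -- degree budget B
  have hM2dvd : M2.prod ∣ F :=
    ⟨Ma.prod * M1.prod * (un : Polynomial (Polynomial Fq)), by rw [← hMprodsplit]; ring⟩
  have hprodeq : ∏ x ∈ M2.toFinset.attach, x.1 ^ M2.count x.1 = M2.prod := by
    rw [Finset.prod_attach M2.toFinset (fun π => π ^ M2.count π)]
    exact (Finset.prod_multiset_count M2).symm
  have hM2xne : ∀ x : {g // g ∈ M2.toFinset}, x.1 ^ M2.count x.1 ≠ 0 := fun x =>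
    pow_ne_zero _ (hMne x.1 (hM2mem x.1 (Multiset.mem_toFinset.mp x.2)).1)
  have hbudgetB : ∑ x ∈ M2.toFinset.attach, (rf x).natDegree ≤ D * H + D * H := by
    have hH2 : ∑ x ∈ M2.toFinset.attach, polyHeight (x.1 ^ M2.count x.1) ≤ H := by
      rw [← polyHeight_prod _ _ (fun x _ => hM2xne x), hprodeq]
      exact le_trans (polyHeight_dvd_le hM2dvd hF0) (hht i₀)
    have hD2 : ∑ x ∈ M2.toFinset.attach, (x.1 ^ M2.count x.1).natDegree ≤ D := by
      rw [← Polynomial.natDegree_prod _ _ (fun x _ => hM2xne x), hprodeq]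
      exact le_trans (natDegree_le_of_dvd hM2dvd hF0) (hdeg i₀)
    calc ∑ x ∈ M2.toFinset.attach, (rf x).natDegree
        ≤ ∑ x ∈ M2.toFinset.attach,
            ((f (jf x)).natDegree * polyHeight (x.1 ^ M2.count x.1)
              + (x.1 ^ M2.count x.1).natDegree * polyHeight (f (jf x))) :=
          Finset.sum_le_sum fun x _ => hrdeg x
      _ ≤ ∑ x ∈ M2.toFinset.attach,
            (D * polyHeight (x.1 ^ M2.count x.1) + (x.1 ^ M2.count x.1).natDegree * H) :=
          Finset.sum_le_sum fun x _ => add_le_add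
            (Nat.mul_le_mul_right _ (hdeg _)) (Nat.mul_le_mul_left _ (hht _))
      _ = D * (∑ x ∈ M2.toFinset.attach, polyHeight (x.1 ^ M2.count x.1))
            + (∑ x ∈ M2.toFinset.attach, (x.1 ^ M2.count x.1).natDegree) * H := by
          rw [Finset.sum_add_distrib, Finset.mul_sum, Finset.sum_mul]
      _ ≤ D * H + D * H :=
          add_le_add (Nat.mul_le_mul_left _ hH2) (Nat.mul_le_mul_right _ hD2)
  have h𝒯deg : 𝒯.natDegree ≤ (2 * D + 1) * H := by
    have e : 𝒯.natDegree = c₀.natDegree + (∑ π ∈ M1.toFinset, π.leadingCoeff.natDegree)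
        + ∑ x ∈ M2.toFinset.attach, (rf x).natDegree := by
      rw [h𝒯, natDegree_mul (mul_ne_zero hc₀ne (Finset.prod_ne_zero_iff.mpr hlcne))
        (Finset.prod_ne_zero_iff.mpr fun x _ => hrne x),
        natDegree_mul hc₀ne (Finset.prod_ne_zero_iff.mpr hlcne),
        Polynomial.natDegree_prod _ _ hlcne,
        Polynomial.natDegree_prod _ _ (fun x _ => hrne x)]
    calc 𝒯.natDegree = c₀.natDegree + (∑ π ∈ M1.toFinset, π.leadingCoeff.natDegree)
          + ∑ x ∈ M2.toFinset.attach, (rf x).natDegree := e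
      _ ≤ H + (D * H + D * H) := add_le_add hbudgetA hbudgetB
      _ = (2 * D + 1) * H := by ring
  -- counting roots over Ω
  have hScard : ∀ x : {g // g ∈ M1.toFinset},
      ((x.1.map ((algebraMap (RatFunc Fq) (AlgebraicClosure (RatFunc Fq))).comp
        (algebraMap (Polynomial Fq) (RatFunc Fq)))).roots.toFinset).card
        = (σf x).natDegree := by
    intro x
    have h1 : x.1.map ((algebraMap (RatFunc Fq) (AlgebraicClosure (RatFunc Fq))).comp
          (algebraMap (Polynomial Fq) (RatFunc Fq)))
        = (x.1.map (algebraMap (Polynomial Fq) (RatFunc Fq))).map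
            (algebraMap (RatFunc Fq) (AlgebraicClosure (RatFunc Fq))) := by
      rw [Polynomial.map_map]
    rw [h1]
    have h2 : ((x.1.map (algebraMap (Polynomial Fq) (RatFunc Fq))).aroots
        (AlgebraicClosure (RatFunc Fq))).toFinset.card
        = (x.1.map (algebraMap (Polynomial Fq) (RatFunc Fq))).natSepDegree :=
      (Polynomial.natSepDegree_eq_of_isAlgClosed _ _).symm
    rw [aroots_def] at h2
    rw [h2, ← hσexp x, map_expand, Polynomial.natSepDegree_expand,
      (hσsep x).natSepDegree_eq_natDegree,
      Polynomial.natDegree_map_eq_of_injective hKinj]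
  have hSsub : ∀ x : {g // g ∈ M1.toFinset},
      ∀ α ∈ (x.1.map ((algebraMap (RatFunc Fq) (AlgebraicClosure (RatFunc Fq))).comp
        (algebraMap (Polynomial Fq) (RatFunc Fq)))).roots.toFinset,
      ∀ i, ((f i).map ((algebraMap (RatFunc Fq) (AlgebraicClosure (RatFunc Fq))).comp
        (algebraMap (Polynomial Fq) (RatFunc Fq)))).eval α = 0 := by
    intro x α hα i
    have hdvdi : x.1 ∣ f i := (hM1mem x.1 (Multiset.mem_toFinset.mp x.2)).2.2 i
    have hα' := mem_roots'.mp (Multiset.mem_toFinset.mp hα)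
    exact eval_eq_zero_of_dvd_of_eval_eq_zero (Polynomial.map_dvd _ hdvdi) hα'.2
  have hSdisj : ∀ x y : {g // g ∈ M1.toFinset}, x ≠ y →
      Disjoint ((x.1.map ((algebraMap (RatFunc Fq) (AlgebraicClosure (RatFunc Fq))).comp
          (algebraMap (Polynomial Fq) (RatFunc Fq)))).roots.toFinset)
        ((y.1.map ((algebraMap (RatFunc Fq) (AlgebraicClosure (RatFunc Fq))).comp
          (algebraMap (Polynomial Fq) (RatFunc Fq)))).roots.toFinset) := by
    intro x y hxy
    rw [Finset.disjoint_left]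
    intro α hαx hαy
    have hxmem := hM1mem x.1 (Multiset.mem_toFinset.mp x.2)
    have hymem := hM1mem y.1 (Multiset.mem_toFinset.mp y.2)
    have hne' : x.1 ≠ y.1 := fun h => hxy (Subtype.ext h)
    have hprimx : x.1.IsPrimitive := isPrimitive_of_prime (hprime _ hxmem.1) hxmem.2.1
    have hprimy : y.1.IsPrimitive := isPrimitive_of_prime (hprime _ hymem.1) hymem.2.1
    have hirrx : Irreducible (x.1.map (algebraMap (Polynomial Fq) (RatFunc Fq))) :=
      hprimx.irreducible_iff_irreducible_map_fraction_map.mp (hprime _ hxmem.1).irreducible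
    have hirry : Irreducible (y.1.map (algebraMap (Polynomial Fq) (RatFunc Fq))) :=
      hprimy.irreducible_iff_irreducible_map_fraction_map.mp (hprime _ hymem.1).irreducible
    have hnotdvd : ¬ (x.1.map (algebraMap (Polynomial Fq) (RatFunc Fq))
        ∣ y.1.map (algebraMap (Polynomial Fq) (RatFunc Fq))) := by
      intro hdvd
      have hdvd' : x.1 ∣ y.1 :=
        (hprimx.dvd_iff_fraction_map_dvd_fraction_map (RatFunc Fq)).mpr hdvd
      have hass : Associated x.1 y.1 :=
        (hprime _ hxmem.1).irreducible.associated_of_dvd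
          (hprime _ hymem.1).irreducible hdvd'
      apply hne'
      rw [← hnormalized _ hxmem.1, ← hnormalized _ hymem.1]
      exact normalize_eq_normalize hass.dvd hass.symm.dvd
    have hcop : IsCoprime (x.1.map (algebraMap (Polynomial Fq) (RatFunc Fq)))
        (y.1.map (algebraMap (Polynomial Fq) (RatFunc Fq))) :=
      (EuclideanDomain.dvd_or_coprime _ _ hirrx).resolve_left hnotdvd
    obtain ⟨a, b, hab⟩ := hcop
    have hαx' := mem_roots'.mp (Multiset.mem_toFinset.mp hαx)
    have hαy' := mem_roots'.mp (Multiset.mem_toFinset.mp hαy)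
    have hmapx : (x.1.map ((algebraMap (RatFunc Fq) (AlgebraicClosure (RatFunc Fq))).comp
        (algebraMap (Polynomial Fq) (RatFunc Fq)))).eval α = 0 := hαx'.2
    have hmapy : (y.1.map ((algebraMap (RatFunc Fq) (AlgebraicClosure (RatFunc Fq))).comp
        (algebraMap (Polynomial Fq) (RatFunc Fq)))).eval α = 0 := hαy'.2
    have := congrArg (fun g : Polynomial (RatFunc Fq) =>
      (g.map (algebraMap (RatFunc Fq) (AlgebraicClosure (RatFunc Fq)))).eval α) hab
    simp only [Polynomial.map_add, Polynomial.map_mul, Polynomial.map_one, eval_add, eval_mul,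
      eval_one, Polynomial.map_map, hmapx, hmapy, mul_zero] at this
    simp at this
  have hcount : ∑ x ∈ M1.toFinset.attach, (σf x).natDegree ≤ N₀ := by
    have hbiU : (M1.toFinset.attach.biUnion fun x =>
        (x.1.map ((algebraMap (RatFunc Fq) (AlgebraicClosure (RatFunc Fq))).comp
          (algebraMap (Polynomial Fq) (RatFunc Fq)))).roots.toFinset) ⊆ Z := by
      intro α hα
      obtain ⟨x, -, hαx⟩ := Finset.mem_biUnion.mp hα
      exact hZsub (fun i => hSsub x α hαx i)
    calc ∑ x ∈ M1.toFinset.attach, (σf x).natDegree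
        = ∑ x ∈ M1.toFinset.attach,
            ((x.1.map ((algebraMap (RatFunc Fq) (AlgebraicClosure (RatFunc Fq))).comp
              (algebraMap (Polynomial Fq) (RatFunc Fq)))).roots.toFinset).card :=
          Finset.sum_congr rfl fun x _ => (hScard x).symm
      _ = (M1.toFinset.attach.biUnion fun x =>
            (x.1.map ((algebraMap (RatFunc Fq) (AlgebraicClosure (RatFunc Fq))).comp
              (algebraMap (Polynomial Fq) (RatFunc Fq)))).roots.toFinset).card :=
          (Finset.card_biUnion fun x _ y _ hxy => hSdisj x y hxy).symm
      _ ≤ Z.card := Finset.card_le_card hbiU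
      _ ≤ N₀ := hZcard
  refine ⟨𝒯, h𝒯ne, h𝒯deg, ?_⟩
  -- specialization part
  intro τ hτ
  set evτ : Polynomial Fq →+* AlgebraicClosure Fq :=
    eval₂RingHom (algebraMap Fq (AlgebraicClosure Fq)) τ with hevτ
  have haev : ∀ r : Polynomial Fq, aeval τ r = evτ r := by
    intro r
    rw [aeval_def, hevτ, coe_eval₂RingHom]
  have hdvdne : ∀ g : Polynomial Fq, g ∣ 𝒯 → evτ g ≠ 0 := by
    rintro g ⟨w, hw⟩ h0
    apply hτ
    rw [haev, hw, map_mul, h0, zero_mul]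
  have hfrobinj : ∀ n : ℕ,
      Function.Injective (fun y : AlgebraicClosure Fq => y ^ pc ^ n) := by
    intro n
    have heq : (fun y : AlgebraicClosure Fq => y ^ pc ^ n)
        = (frobenius (AlgebraicClosure Fq) pc)^[n] := by
      funext y
      rw [iterate_frobenius]
    rw [heq]
    exact Function.Injective.iterate (frobenius (AlgebraicClosure Fq) pc).injective n
  refine ⟨M1.toFinset.attach.biUnion (fun x =>
    (((σf x).map evτ).roots.toFinset).preimage (fun y => y ^ pc ^ mf x)
      ((hfrobinj (mf x)).injOn)), ?_, ?_⟩
  · refine le_trans Finset.card_biUnion_le (le_trans (Finset.sum_le_sum ?_) hcount)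
    intro x _
    have hpremem : ∀ y : AlgebraicClosure Fq,
        y ∈ (((σf x).map evτ).roots.toFinset).preimage (fun y => y ^ pc ^ mf x)
          ((hfrobinj (mf x)).injOn) →
        (fun y : AlgebraicClosure Fq => y ^ pc ^ mf x) y ∈ ((σf x).map evτ).roots.toFinset :=
      fun y hy => (Finset.mem_preimage
        (f := fun y : AlgebraicClosure Fq => y ^ pc ^ mf x)).mp hy
    refine le_trans (Finset.card_le_card_of_injOn (fun y => y ^ pc ^ mf x)
      hpremem ((hfrobinj (mf x)).injOn)) ?_
    refine le_trans (Multiset.toFinset_card_le _) ?_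
    exact le_trans (Polynomial.card_roots' _) (natDegree_map_le)
  · intro x₀ hx₀
    simp only [Set.mem_setOf_eq] at hx₀
    set Φ : Polynomial (Polynomial Fq) →+* AlgebraicClosure Fq :=
      (evalRingHom x₀).comp (mapRingHom evτ) with hΦ
    have hΦdef : ∀ g : Polynomial (Polynomial Fq), Φ g = ((g.map evτ).eval x₀) := fun g => rfl
    have hΦf : ∀ i, Φ (f i) = 0 := fun i => hx₀ i
    have hΦC : ∀ r : Polynomial Fq, Φ (C r) = evτ r := by
      intro r
      rw [hΦdef, map_C, eval_C]
    have hΦF : Φ F = 0 := hΦf i₀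
    have hsplitF : Φ Ma.prod * (Φ M1.prod * Φ M2.prod) * Φ (un : Polynomial (Polynomial Fq))
        = 0 := by
      rw [← map_mul, ← map_mul, ← map_mul, hMprodsplit, hΦF]
    have hΦun : Φ (un : Polynomial (Polynomial Fq)) ≠ 0 :=
      (un.isUnit.map Φ).ne_zero
    have hΦMa : Φ Ma.prod ≠ 0 := by
      rw [← hc₀, hΦC]
      exact hdvdne c₀ ⟨(∏ π ∈ M1.toFinset, π.leadingCoeff) * (∏ x ∈ M2.toFinset.attach, rf x),
        by rw [h𝒯]; ring⟩
    have h12 : Φ M1.prod = 0 ∨ Φ M2.prod = 0 := by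
      by_contra hcon
      push_neg at hcon
      exact (mul_ne_zero (mul_ne_zero hΦMa (mul_ne_zero hcon.1 hcon.2)) hΦun) hsplitF
    have hfind : ∀ Mi : Multiset (Polynomial (Polynomial Fq)), Φ Mi.prod = 0 →
        ∃ π ∈ Mi, Φ π = 0 := by
      intro Mi h0
      have h1 : (Mi.map Φ).prod = 0 := by rw [← map_multiset_prod]; exact h0
      rw [Multiset.prod_eq_zero_iff] at h1
      obtain ⟨π, hπ, hπ0⟩ := Multiset.mem_map.mp h1
      exact ⟨π, hπ, hπ0⟩
    rcases h12 with h1 | h2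
    · obtain ⟨π, hπM1, hπ0⟩ := hfind M1 h1
      set x : {g // g ∈ M1.toFinset} := ⟨π, Multiset.mem_toFinset.mpr hπM1⟩ with hx
      have hev : ((σf x).map evτ).eval (x₀ ^ pc ^ mf x) = 0 := by
        have heq : Φ π = ((σf x).map evτ).eval (x₀ ^ pc ^ mf x) := by
          conv_lhs => rw [show π = expand (Polynomial Fq) (pc ^ mf x) (σf x) from (hσexp x).symm]
          rw [hΦdef, map_expand, expand_eval]
        rw [← heq, hπ0]
      have hσmapne : (σf x).map evτ ≠ 0 := by
        intro h0
        have hlc0 : evτ ((σf x).leadingCoeff) = 0 := by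
          have hcks := congrArg (fun g : Polynomial (AlgebraicClosure Fq) =>
            g.coeff (σf x).natDegree) h0
          simpa [coeff_map] using hcks
        rw [hσlc x] at hlc0
        refine hdvdne (x.1.leadingCoeff) ?_ hlc0
        refine dvd_trans (Finset.dvd_prod_of_mem (fun π => π.leadingCoeff) x.2) ?_
        exact ⟨c₀ * (∏ x ∈ M2.toFinset.attach, rf x), by rw [h𝒯]; ring⟩
      refine Finset.mem_coe.mpr (Finset.mem_biUnion.mpr ⟨x, Finset.mem_attach _ _, ?_⟩)
      rw [Finset.mem_preimage, Multiset.mem_toFinset]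
      exact mem_roots'.mpr ⟨hσmapne, hev⟩
    · exfalso
      obtain ⟨π, hπM2, hπ0⟩ := hfind M2 h2
      set x : {g // g ∈ M2.toFinset} := ⟨π, Multiset.mem_toFinset.mpr hπM2⟩ with hx
      have hcount0 : M2.count π ≠ 0 := (Multiset.count_pos.mpr hπM2).ne'
      have heval := congrArg Φ (habf x)
      rw [map_add, map_mul, map_mul, map_pow, hΦC] at heval
      have hπx : Φ x.1 = 0 := hπ0
      rw [hπx, zero_pow hcount0, mul_zero, hΦf (jf x), mul_zero, add_zero] at heval
      refine hdvdne (rf x) ?_ heval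
      refine dvd_trans (Finset.dvd_prod_of_mem rf (Finset.mem_attach _ x)) ?_
      exact ⟨c₀ * ∏ π ∈ M1.toFinset, π.leadingCoeff, by rw [h𝒯]; ring⟩
end

section
/- Let q be a power of a prime, let r ≥ 2 be an integer, let K = F_q(t), let a ∈ K be nonzero, and let P(T) ∈ F_q[T] be a non-constant polynomial. Then the map z ↦ Φ^{(z)}_{P(T)}(a) is a polynomial in K[z] of degree q^{r(deg_T(P) − 1)}. -/
open Polynomial

/-- The additive polynomial map `φ(x) = t·x + λ·x^q + x^{q^r}` defining the Drinfeld module. -/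
noncomputable def drinfeldPhi (q r : ℕ) {L : Type*} [Field L] (t lam : L) (x : L) : L :=
  t * x + lam * x ^ q + x ^ q ^ r

/-- The action `Φ^{(t,λ)}_{P(T)}(c) = Σ_i P_i · φ^{∘i}(c)` of `P(T) ∈ F_q[T]`
on a point `c` of a field `L`, where `ι : F_q →+* L`. -/
noncomputable def drinfeldAct (q r : ℕ) {Fq L : Type*} [Field Fq] [Field L]
    (ι : Fq →+* L) (t lam : L) (P : Polynomial Fq) (c : L) : L :=
  ∑ i ∈ Finset.range (P.natDegree + 1), ι (P.coeff i) * (drinfeldPhi q r t lam)^[i] c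

/-- The map `x ↦ t·x + z·x^q + x^{q^r}` on `K[z]`, where `K = F_q(t)` and the parameter
`z` is the polynomial variable. -/
noncomputable def drinfeldPolyPhi (q r : ℕ) {Fq : Type*} [Field Fq]
    (x : Polynomial (RatFunc Fq)) : Polynomial (RatFunc Fq) :=
  C RatFunc.X * x + X * x ^ q + x ^ q ^ r

/-- `Φ^{(z)}_{P(T)}(a)` viewed as a polynomial in the parameter `z`, with coefficients
in `K = F_q(t)`. -/
noncomputable def drinfeldPolyAct (q r : ℕ) {Fq : Type*} [Field Fq]
    (P : Polynomial Fq) (a : RatFunc Fq) : Polynomial (RatFunc Fq) :=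
  ∑ i ∈ Finset.range (P.natDegree + 1),
    C (algebraMap Fq (RatFunc Fq) (P.coeff i)) * (drinfeldPolyPhi q r)^[i] (C a)

section Aux
variable {Fq : Type*} [Field Fq]

lemma drinfeld_eval_phi (q r : ℕ) (z : RatFunc Fq) (x : Polynomial (RatFunc Fq)) :
    (drinfeldPolyPhi q r x).eval z = drinfeldPhi q r RatFunc.X z (x.eval z) := by
  simp [drinfeldPolyPhi, drinfeldPhi]

lemma drinfeld_eval_iter (q r : ℕ) (z : RatFunc Fq) (x : Polynomial (RatFunc Fq)) (i : ℕ) :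
    ((drinfeldPolyPhi q r)^[i] x).eval z = (drinfeldPhi q r RatFunc.X z)^[i] (x.eval z) := by
  induction i with
  | zero => simp
  | succ n ih =>
      rw [Function.iterate_succ_apply', Function.iterate_succ_apply',
        drinfeld_eval_phi, ih]

lemma drinfeld_phi_degree (q r : ℕ) (hq : 2 ≤ q) (hr : 2 ≤ r)
    (p : Polynomial (RatFunc Fq)) (d : ℕ) (hd : 1 ≤ d) (hp : p.degree = (d : ℕ)) :
    (drinfeldPolyPhi q r p).degree = ((q ^ r * d : ℕ) : WithBot ℕ) := by
  have hbig : (p ^ q ^ r).degree = ((q ^ r * d : ℕ) : WithBot ℕ) := by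
    rw [degree_pow, hp]
    simp [Nat.cast_mul]
  have harith : 1 + q * d < q ^ r * d := by
    have h1 : q ^ 2 ≤ q ^ r := Nat.pow_le_pow_right (by omega) hr
    have hqd : 2 ≤ q * d := le_trans hq (Nat.le_mul_of_pos_right _ hd)
    calc 1 + q * d < q * d + q * d := by omega
      _ = 2 * (q * d) := by ring
      _ ≤ q * (q * d) := Nat.mul_le_mul_right _ hq
      _ = q ^ 2 * d := by ring
      _ ≤ q ^ r * d := Nat.mul_le_mul_right _ h1
  have hsmall : (C RatFunc.X * p + X * p ^ q).degree < ((q ^ r * d : ℕ) : WithBot ℕ) := by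
    apply lt_of_le_of_lt (degree_add_le _ _)
    apply max_lt
    · apply lt_of_le_of_lt (degree_mul_le _ _)
      have : degree (C (RatFunc.X : RatFunc Fq)) + p.degree ≤ 0 + ((d : ℕ) : WithBot ℕ) := by
        rw [hp]; exact add_le_add_left degree_C_le _
      apply lt_of_le_of_lt this
      rw [zero_add]
      exact_mod_cast Nat.lt_of_lt_of_le (by nlinarith) (le_of_lt harith)
    · apply lt_of_le_of_lt (degree_mul_le _ _)
      have hx : degree (X : Polynomial (RatFunc Fq)) ≤ 1 := degree_X_le
      have hpq : (p ^ q).degree = ((q * d : ℕ) : WithBot ℕ) := by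
        rw [degree_pow, hp]; simp [Nat.cast_mul]
      rw [hpq]
      calc degree (X : Polynomial (RatFunc Fq)) + ((q * d : ℕ) : WithBot ℕ)
          ≤ 1 + ((q * d : ℕ) : WithBot ℕ) := add_le_add_left hx _
        _ = ((1 + q * d : ℕ) : WithBot ℕ) := by push_cast; ring
        _ < ((q ^ r * d : ℕ) : WithBot ℕ) := by exact_mod_cast harith
  rw [drinfeldPolyPhi, degree_add_eq_right_of_degree_lt (hbig ▸ hsmall), hbig]

lemma drinfeld_iter_degree (q r : ℕ) (hq : 2 ≤ q) (hr : 2 ≤ r)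
    (a : RatFunc Fq) (ha : a ≠ 0) (i : ℕ) :
    ((drinfeldPolyPhi q r)^[i + 1] (C a)).degree = ((q ^ (r * i) : ℕ) : WithBot ℕ) := by
  induction i with
  | zero =>
      have h1 : drinfeldPolyPhi q r (C a)
          = C (a ^ q) * X + C (RatFunc.X * a + a ^ q ^ r) := by
        rw [drinfeldPolyPhi, ← C_pow, ← C_pow, ← C_mul, C_add]
        ring
      simp only [zero_add, Function.iterate_one, h1]
      rw [degree_linear (pow_ne_zero _ ha)]
      norm_num
  | succ n ih =>
      rw [Function.iterate_succ_apply']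
      have h1 : 1 ≤ q ^ (r * n) := Nat.one_le_pow _ _ (by omega)
      rw [drinfeld_phi_degree q r hq hr _ _ h1 ih]
      congr 1
      rw [← pow_add]
      ring_nf

lemma drinfeld_iter_natDegree (q r : ℕ) (hq : 2 ≤ q) (hr : 2 ≤ r)
    (a : RatFunc Fq) (ha : a ≠ 0) (i : ℕ) :
    ((drinfeldPolyPhi q r)^[i + 1] (C a)).natDegree = q ^ (r * i) :=
  natDegree_eq_of_degree_eq_some (drinfeld_iter_degree q r hq hr a ha i)

end Aux
/-- For nonzero `a ∈ K = F_q(t)` and non-constant `P(T) ∈ F_q[T]`, the map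
`z ↦ Φ^{(z)}_{P(T)}(a)` is a polynomial in `K[z]` of degree `q^{r(deg_T(P) − 1)}`. -/
theorem drinfeld_poly_act_degree
    {Fq : Type*} [Field Fq] [Fintype Fq] (q r : ℕ)
    (hq : Fintype.card Fq = q) (hr : 2 ≤ r)
    (a : RatFunc Fq) (ha : a ≠ 0)
    (P : Polynomial Fq) (hP : P.natDegree ≠ 0) :
    (∀ z : RatFunc Fq, (drinfeldPolyAct q r P a).eval z =
        drinfeldAct q r (algebraMap Fq (RatFunc Fq)) RatFunc.X z P a) ∧
      (drinfeldPolyAct q r P a).natDegree = q ^ (r * (P.natDegree - 1)) := by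
  have hq2 : 2 ≤ q := by rw [← hq]; exact Fintype.one_lt_card
  constructor
  · intro z
    rw [drinfeldPolyAct, eval_finset_sum]
    unfold drinfeldAct
    refine Finset.sum_congr rfl fun i _ => ?_
    rw [eval_mul, eval_C, drinfeld_eval_iter, eval_C]
  · obtain ⟨m, hm⟩ : ∃ m, P.natDegree = m + 1 := ⟨P.natDegree - 1, by omega⟩
    set f : ℕ → Polynomial (RatFunc Fq) := fun i =>
      C (algebraMap Fq (RatFunc Fq) (P.coeff i)) * (drinfeldPolyPhi q r)^[i] (C a) with hf
    have hPne : P ≠ 0 := fun h => hP (by simp [h])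
    have hc0 : P.coeff P.natDegree ≠ 0 := mt leadingCoeff_eq_zero.mp hPne
    have hcn : algebraMap Fq (RatFunc Fq) (P.coeff P.natDegree) ≠ 0 :=
      fun h => hc0 ((algebraMap Fq (RatFunc Fq)).injective (by simpa using h))
    have htop : (f P.natDegree).degree = ((q ^ (r * m) : ℕ) : WithBot ℕ) := by
      rw [hf]
      simp only
      rw [degree_C_mul hcn, hm]
      exact drinfeld_iter_degree q r hq2 hr a ha m
    have hsmall : ∀ i ∈ Finset.range P.natDegree,
        (f i).degree < ((q ^ (r * m) : ℕ) : WithBot ℕ) := by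
      intro i hi
      rw [Finset.mem_range, hm] at hi
      have hle : (f i).degree ≤ ((drinfeldPolyPhi q r)^[i] (C a)).degree := by
        rw [hf]
        simp only
        calc (C (algebraMap Fq (RatFunc Fq) (P.coeff i)) *
              (drinfeldPolyPhi q r)^[i] (C a)).degree
            ≤ degree (C (algebraMap Fq (RatFunc Fq) (P.coeff i))) +
              ((drinfeldPolyPhi q r)^[i] (C a)).degree := degree_mul_le _ _
          _ ≤ 0 + ((drinfeldPolyPhi q r)^[i] (C a)).degree :=
              add_le_add_left degree_C_le _
          _ = _ := zero_add _
      refine lt_of_le_of_lt hle ?_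
      rcases i with _ | j
      · simp only [Function.iterate_zero, id]
        refine lt_of_le_of_lt degree_C_le ?_
        exact_mod_cast Nat.cast_lt.mpr (Nat.one_le_pow _ _ (by omega) : 0 < q ^ (r * m))
      · rw [drinfeld_iter_degree q r hq2 hr a ha j]
        exact_mod_cast Nat.pow_lt_pow_right (by omega)
          (Nat.mul_lt_mul_of_pos_left (by omega) (by omega))
    have hsum : (drinfeldPolyAct q r P a).degree = ((q ^ (r * m) : ℕ) : WithBot ℕ) := by
      rw [drinfeldPolyAct]
      rw [show ∑ i ∈ Finset.range (P.natDegree + 1),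
          C (algebraMap Fq (RatFunc Fq) (P.coeff i)) * (drinfeldPolyPhi q r)^[i] (C a)
          = ∑ i ∈ Finset.range P.natDegree, f i + f P.natDegree from
          Finset.sum_range_succ f P.natDegree]
      rw [degree_add_eq_right_of_degree_lt, htop]
      rw [htop]
      refine lt_of_le_of_lt (degree_sum_le _ _) ?_
      rw [Finset.sup_lt_iff (by exact_mod_cast WithBot.bot_lt_coe _)]
      exact hsmall
    rw [natDegree_eq_of_degree_eq_some hsum, hm]
    simp
end

section
/- Let q be a power of a prime, let r ≥ 2 be an integer, let K = F_q(t), and let a ∈ K be nonzero. For each positive integer n, let f_n(z) := Φ^{(z)}_{T^n}(a) ∈ K[z]. Then deg_z(f_n) = q^{r(n−1)} and the leading coefficient of f_n(z) is a^{q^{1+r(n−1)}}. -/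
open Polynomial

lemma drinfeld_aux {Fq : Type*} [Field Fq] (q r : ℕ)
    (hq2 : 2 ≤ q) (hr : 2 ≤ r) (a : RatFunc Fq) (ha : a ≠ 0) (m : ℕ) :
    ((drinfeldPolyPhi q r)^[m + 1] (C a)).natDegree = q ^ (r * m) ∧
      ((drinfeldPolyPhi q r)^[m + 1] (C a)).leadingCoeff = a ^ q ^ (1 + r * m) := by
  induction m with
  | zero =>
    have h1 : (drinfeldPolyPhi q r)^[1] (C a) =
        C (a ^ q) * X + C (RatFunc.X * a + a ^ q ^ r) := by
      simp only [Function.iterate_one, drinfeldPolyPhi, ← C_pow, ← C_mul, map_add]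
      ring
    have haq : a ^ q ≠ 0 := pow_ne_zero _ ha
    constructor
    · rw [h1, natDegree_linear haq]; simp
    · rw [h1, leadingCoeff_linear haq]; simp
  | succ m ih =>
    obtain ⟨hd, hl⟩ := ih
    set g := (drinfeldPolyPhi q r)^[m + 1] (C a) with hg
    have hlc : g.leadingCoeff ≠ 0 := by
      rw [hl]; exact pow_ne_zero _ ha
    have hg0 : g ≠ 0 := fun h => hlc (by simp [h])
    have hq0 : 0 < q := by omega
    have hd1 : 1 ≤ q ^ (r * m) := Nat.one_le_pow _ _ hq0
    -- arithmetic
    have harith : 1 + q * q ^ (r * m) < q ^ r * q ^ (r * m) := by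
      have h2 : 2 * q ≤ q ^ r :=
        calc 2 * q ≤ q * q := by nlinarith
        _ ≤ q ^ r := by
            calc q * q = q ^ 2 := by ring
            _ ≤ q ^ r := Nat.pow_le_pow_right hq0 hr
      nlinarith
    have hdeg_s : (C RatFunc.X * g + X * g ^ q).degree <
        (g ^ q ^ r).degree := by
      have hdp : (g ^ q ^ r).degree = ((q ^ r * q ^ (r * m) : ℕ) : WithBot ℕ) := by
        rw [degree_pow, degree_eq_natDegree hg0, hd]
        simp [Nat.cast_mul]
      rw [hdp]
      apply lt_of_le_of_lt (degree_add_le _ _)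
      apply max_lt
      · apply lt_of_le_of_lt (degree_mul_le _ _)
        have h1 : (C (RatFunc.X : RatFunc Fq)).degree ≤ 0 := degree_C_le
        have h2 : g.degree = ((q ^ (r * m) : ℕ) : WithBot ℕ) := by
          rw [degree_eq_natDegree hg0, hd]
        calc (C (RatFunc.X : RatFunc Fq)).degree + g.degree ≤ 0 + g.degree := by
              exact add_le_add h1 le_rfl
          _ = g.degree := by rw [zero_add]
          _ < _ := by
              rw [h2]
              exact_mod_cast lt_of_le_of_lt (by nlinarith : q ^ (r * m) ≤ 1 + q * q ^ (r * m)) harith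
      · have h3 : (X * g ^ q).degree = ((1 + q * q ^ (r * m) : ℕ) : WithBot ℕ) := by
          rw [degree_mul, degree_X, degree_pow, degree_eq_natDegree hg0, hd]
          push_cast
          rw [nsmul_eq_mul]
        rw [h3]
        exact_mod_cast harith
    have hiter : (drinfeldPolyPhi q r)^[m + 1 + 1] (C a) =
        (C RatFunc.X * g + X * g ^ q) + g ^ q ^ r := by
      rw [Function.iterate_succ_apply', ← hg]
      rfl
    constructor
    · rw [hiter, natDegree_eq_of_degree_eq (degree_add_eq_right_of_degree_lt hdeg_s),
        natDegree_pow, hd, ← pow_add]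
      congr 1
      ring
    · rw [hiter, leadingCoeff_add_of_degree_lt hdeg_s, leadingCoeff_pow, hl,
        ← pow_mul, ← pow_add]
      congr 2
      ring

/-- For nonzero `a ∈ K = F_q(t)` and `n ≥ 1`, the polynomial
`f_n(z) = Φ^{(z)}_{T^n}(a) ∈ K[z]` (the `n`-fold iterate of `Φ^{(z)}_T` applied to `a`)
has degree `q^{r(n−1)}` in `z` and leading coefficient `a^{q^{1+r(n−1)}}`. -/
theorem drinfeld_iterate_degree_leadingCoeff
    {Fq : Type*} [Field Fq] [Fintype Fq] (q r : ℕ)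
    (hq : Fintype.card Fq = q) (hr : 2 ≤ r)
    (a : RatFunc Fq) (ha : a ≠ 0) (n : ℕ) (hn : 1 ≤ n) :
    ((drinfeldPolyPhi q r)^[n] (C a)).natDegree = q ^ (r * (n - 1)) ∧
      ((drinfeldPolyPhi q r)^[n] (C a)).leadingCoeff = a ^ q ^ (1 + r * (n - 1)) := by
  have hq2 : 2 ≤ q := hq ▸ Fintype.one_lt_card
  obtain ⟨m, rfl⟩ := Nat.exists_eq_add_of_le hn
  rw [show 1 + m = m + 1 by ring, Nat.add_sub_cancel]
  exact drinfeld_aux q r hq2 hr a ha m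
end
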